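/- Let f : ℝ → ℝ be continuously differentiable on [0,π] with f(0) = f(π) = 0. Then ∫₀^π (f'(t))² dt ≥ ∫₀^π (f(t))² dt. -/

import Mathlib

open Real Set Filter Topology intervalIntegral MeasureTheory

lemma steklov_key (f f' : ℝ → ℝ)
    (hderiv : ∀ t ∈ Set.Icc (0 : ℝ) Real.pi, HasDerivAt f (f' t) t)
    (hcont : ContinuousOn f' (Set.Icc (0 : ℝ) Real.pi))
    {ε : ℝ} (h1 : 0 < ε) (h2 : ε < Real.pi / 2) :
    (f (Real.pi - ε))^2 * (Real.cos (Real.pi - ε) / Real.sin (Real.pi - ε))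
      - (f ε)^2 * (Real.cos ε / Real.sin ε)
      ≤ (∫ t in ε..(Real.pi - ε), (f' t)^2) - ∫ t in ε..(Real.pi - ε), (f t)^2 := by
  have hle : ε ≤ Real.pi - ε := by linarith
  have hsub : Icc ε (Real.pi - ε) ⊆ Icc 0 Real.pi :=
    Icc_subset_Icc h1.le (by linarith)
  have hsin : ∀ t ∈ Icc ε (Real.pi - ε), 0 < Real.sin t := fun t ht =>
    Real.sin_pos_of_pos_of_lt_pi (lt_of_lt_of_le h1 ht.1) (lt_of_le_of_lt ht.2 (by linarith))
  have huIcc : uIcc ε (Real.pi - ε) = Icc ε (Real.pi - ε) := uIcc_of_le hle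
  set c : ℝ → ℝ := fun t => Real.cos t / Real.sin t with hc
  set G : ℝ → ℝ := fun t => (f t)^2 * c t with hGdef
  set dG : ℝ → ℝ := fun t => 2 * f t * f' t * c t - (f t)^2 / (Real.sin t)^2 with hdG
  -- derivative of G
  have hG : ∀ t ∈ uIcc ε (Real.pi - ε), HasDerivAt G (dG t) t := by
    intro t ht
    rw [huIcc] at ht
    have hf := hderiv t (hsub ht)
    have hs := (hsin t ht).ne'
    have hcd : HasDerivAt c ((-Real.sin t * Real.sin t - Real.cos t * Real.cos t) /
        (Real.sin t)^2) t := by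
      exact (Real.hasDerivAt_cos t).div (Real.hasDerivAt_sin t) hs
    have := (hf.pow 2).mul hcd
    refine this.congr_deriv ?_
    have hpy := Real.sin_sq_add_cos_sq t
    simp only [hdG, hc, pow_one, Pi.pow_apply]
    field_simp
    linear_combination (-(f t ^ 2)) * hpy
  -- continuity facts
  have hfC : ContinuousOn f (Icc 0 Real.pi) := fun t ht =>
    (hderiv t ht).continuousAt.continuousWithinAt
  have hfC' : ContinuousOn f (Icc ε (Real.pi - ε)) := hfC.mono hsub
  have hf'C' : ContinuousOn f' (Icc ε (Real.pi - ε)) := hcont.mono hsub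
  have hcC : ContinuousOn c (Icc ε (Real.pi - ε)) :=
    Real.continuous_cos.continuousOn.div Real.continuous_sin.continuousOn
      (fun t ht => (hsin t ht).ne')
  have hdGC : ContinuousOn dG (Icc ε (Real.pi - ε)) := by
    apply ContinuousOn.sub
    · exact (((continuousOn_const.mul hfC').mul hf'C').mul hcC)
    · exact (hfC'.pow 2).div ((Real.continuous_sin.continuousOn).pow 2)
        (fun t ht => pow_ne_zero 2 (hsin t ht).ne')
  have hdGint : IntervalIntegrable dG volume ε (Real.pi - ε) := by
    apply ContinuousOn.intervalIntegrable; rwa [huIcc]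
  have hftc : ∫ t in ε..(Real.pi - ε), dG t = G (Real.pi - ε) - G ε :=
    integral_eq_sub_of_hasDerivAt hG hdGint
  -- nonnegativity of the square
  have hnn : (0:ℝ) ≤ ∫ t in ε..(Real.pi - ε), (f' t - f t * c t)^2 :=
    intervalIntegral.integral_nonneg hle (fun u _ => sq_nonneg _)
  -- pointwise identity
  have hEq : EqOn (fun t => (f' t - f t * c t)^2)
      (fun t => (f' t)^2 - dG t - (f t)^2) (uIcc ε (Real.pi - ε)) := by
    intro t ht
    rw [huIcc] at ht
    have hs := (hsin t ht).ne'
    have hpy := Real.sin_sq_add_cos_sq t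
    simp only [hdG, hc]
    field_simp
    linear_combination (f t ^ 2) * hpy
  have hint1 : IntervalIntegrable (fun t => (f' t)^2) volume ε (Real.pi - ε) := by
    apply ContinuousOn.intervalIntegrable; rw [huIcc]; exact hf'C'.pow 2
  have hint2 : IntervalIntegrable (fun t => (f t)^2) volume ε (Real.pi - ε) := by
    apply ContinuousOn.intervalIntegrable; rw [huIcc]; exact hfC'.pow 2
  have hsplit : ∫ t in ε..(Real.pi - ε), (f' t - f t * c t)^2
      = (∫ t in ε..(Real.pi - ε), (f' t)^2) - (∫ t in ε..(Real.pi - ε), dG t)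
        - ∫ t in ε..(Real.pi - ε), (f t)^2 := by
    rw [intervalIntegral.integral_congr hEq, intervalIntegral.integral_sub (hint1.sub hdGint) hint2,
      intervalIntegral.integral_sub hint1 hdGint]
  rw [hsplit, hftc] at hnn
  simp only [hGdef] at hnn ⊢
  linarith

theorem steklov_inequality (f f' : ℝ → ℝ)
    (hderiv : ∀ t ∈ Set.Icc (0 : ℝ) Real.pi, HasDerivAt f (f' t) t)
    (hcont : ContinuousOn f' (Set.Icc (0 : ℝ) Real.pi))
    (h0 : f 0 = 0) (hπ : f Real.pi = 0) :
    ∫ t in (0 : ℝ)..Real.pi, (f' t) ^ 2 ≥ ∫ t in (0 : ℝ)..Real.pi, (f t) ^ 2 := by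
  have hπpos := Real.pi_pos
  have hfC : ContinuousOn f (Icc 0 Real.pi) := fun t ht =>
    (hderiv t ht).continuousAt.continuousWithinAt
  set g : ℝ → ℝ := fun t => (f' t)^2 - (f t)^2 with hg
  have hgC : ContinuousOn g (Icc 0 Real.pi) := (hcont.pow 2).sub (hfC.pow 2)
  have hgI : IntegrableOn g (Icc 0 Real.pi) := hgC.integrableOn_Icc
  -- the primitive
  set P : ℝ → ℝ := fun x => ∫ t in (0:ℝ)..x, g t with hP
  have hPc : ContinuousOn P (Icc 0 Real.pi) := by
    have := continuousOn_primitive_interval (a := (0:ℝ)) (b := Real.pi) (μ := volume) (f := g) ?_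
    · rwa [uIcc_of_le hπpos.le] at this
    · rwa [uIcc_of_le hπpos.le]
  -- A ε = ∫_ε^{π-ε} g
  set A : ℝ → ℝ := fun ε => ∫ t in ε..(Real.pi - ε), g t with hA
  have hgint : ∀ a b, a ∈ Icc (0:ℝ) Real.pi → b ∈ Icc (0:ℝ) Real.pi →
      IntervalIntegrable g volume a b := fun a b ha hb =>
    (hgC.mono (uIcc_subset_Icc ha hb)).intervalIntegrable
  have hAeq : ∀ ε ∈ Ioo (0:ℝ) (Real.pi/2), A ε = P (Real.pi - ε) - P ε := by
    intro ε hε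
    have h1 : (ε:ℝ) ∈ Icc (0:ℝ) Real.pi := ⟨hε.1.le, by linarith [hε.2]⟩
    have h2 : (Real.pi - ε) ∈ Icc (0:ℝ) Real.pi := ⟨by linarith [hε.1, hε.2], by linarith [hε.1]⟩
    simp only [hA, hP]
    rw [← intervalIntegral.integral_interval_sub_left
      (hgint 0 (Real.pi - ε) (left_mem_Icc.2 hπpos.le) h2)
      (hgint 0 ε (left_mem_Icc.2 hπpos.le) h1)]
  -- limit of A
  have hmapP : Tendsto (fun ε : ℝ => Real.pi - ε) (𝓝[>] 0) (𝓝[Icc 0 Real.pi] Real.pi) := by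
    apply tendsto_nhdsWithin_of_tendsto_nhds_of_eventually_within
    · have : Tendsto (fun ε : ℝ => Real.pi - ε) (𝓝 0) (𝓝 (Real.pi - 0)) :=
        (tendsto_const_nhds.sub tendsto_id)
      simpa using this.mono_left nhdsWithin_le_nhds
    · filter_upwards [Ioo_mem_nhdsGT_of_mem (by constructor <;> linarith : (0:ℝ) ∈ Ico 0 (Real.pi/2))] with ε hε
      exact ⟨by linarith [hε.1, hε.2], by linarith [hε.1]⟩
  have hmap0 : Tendsto (fun ε : ℝ => ε) (𝓝[>] 0) (𝓝[Icc 0 Real.pi] 0) := by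
    apply tendsto_nhdsWithin_of_tendsto_nhds_of_eventually_within
    · exact tendsto_id.mono_left nhdsWithin_le_nhds
    · filter_upwards [Ioo_mem_nhdsGT_of_mem (by constructor <;> linarith : (0:ℝ) ∈ Ico 0 (Real.pi/2))] with ε hε
      exact ⟨hε.1.le, by linarith [hε.2]⟩
  have hP0 : P 0 = 0 := by simp [hP]
  have hAtend : Tendsto A (𝓝[>] 0) (𝓝 (∫ t in (0:ℝ)..Real.pi, g t)) := by
    have h1 : Tendsto (fun ε : ℝ => P (Real.pi - ε) - P ε) (𝓝[>] 0)
        (𝓝 (P Real.pi - P 0)) :=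
      ((hPc Real.pi (right_mem_Icc.2 hπpos.le)).tendsto.comp hmapP).sub
        ((hPc 0 (left_mem_Icc.2 hπpos.le)).tendsto.comp hmap0)
    rw [hP0, sub_zero] at h1
    apply h1.congr'
    filter_upwards [Ioo_mem_nhdsGT_of_mem (by constructor <;> linarith : (0:ℝ) ∈ Ico 0 (Real.pi/2))] with ε hε
    exact (hAeq ε hε).symm
  -- boundary terms
  set B : ℝ → ℝ := fun ε => (f (Real.pi - ε))^2 * (Real.cos (Real.pi - ε) / Real.sin (Real.pi - ε))
      - (f ε)^2 * (Real.cos ε / Real.sin ε) with hB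
  -- slope limits
  have hs0 : Tendsto (fun ε => f ε / ε) (𝓝[>] 0) (𝓝 (f' 0)) := by
    have := hasDerivAt_iff_tendsto_slope.1 (hderiv 0 (left_mem_Icc.2 hπpos.le))
    have h2 := this.mono_left (nhdsWithin_mono 0 (fun x hx => ne_of_gt hx : Ioi (0:ℝ) ⊆ {x | x ≠ 0}))
    apply h2.congr'
    filter_upwards [self_mem_nhdsWithin] with ε hε
    simp [slope, h0]
    ring
  have hsπ : Tendsto (fun ε : ℝ => f (Real.pi - ε) / (-ε)) (𝓝[>] 0) (𝓝 (f' Real.pi)) := by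
    have hd := hasDerivAt_iff_tendsto_slope.1 (hderiv Real.pi (right_mem_Icc.2 hπpos.le))
    have hmap : Tendsto (fun ε : ℝ => Real.pi - ε) (𝓝[>] 0) (𝓝[≠] Real.pi) := by
      apply tendsto_nhdsWithin_of_tendsto_nhds_of_eventually_within
      · have : Tendsto (fun ε : ℝ => Real.pi - ε) (𝓝 0) (𝓝 (Real.pi - 0)) :=
          tendsto_const_nhds.sub tendsto_id
        simpa using this.mono_left nhdsWithin_le_nhds
      · filter_upwards [self_mem_nhdsWithin] with ε hε
        exact ne_of_lt (by linarith [Set.mem_Ioi.mp hε])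
    have := hd.comp hmap
    apply this.congr'
    filter_upwards [self_mem_nhdsWithin] with ε hε
    simp [slope, hπ, Function.comp]
    ring
  -- sin ε / ε → 1 and ε / sin ε → 1
  have hsin1 : Tendsto (fun ε : ℝ => Real.sin ε / ε) (𝓝[>] 0) (𝓝 1) := by
    have := hasDerivAt_iff_tendsto_slope.1 (Real.hasDerivAt_sin 0)
    rw [Real.cos_zero] at this
    have h2 := this.mono_left (nhdsWithin_mono 0 (fun x hx => ne_of_gt hx : Ioi (0:ℝ) ⊆ {x | x ≠ 0}))
    apply h2.congr'
    filter_upwards [self_mem_nhdsWithin] with ε hε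
    simp [slope]
    ring
  have hsin1' : Tendsto (fun ε : ℝ => ε / Real.sin ε) (𝓝[>] 0) (𝓝 1) := by
    have := hsin1.inv₀ one_ne_zero
    simp only [inv_div, inv_one] at this
    exact this
  -- T0 tends to 0
  have hεcos : Tendsto (fun ε : ℝ => ε * Real.cos ε) (𝓝[>] 0) (𝓝 0) := by
    have : Tendsto (fun ε : ℝ => ε * Real.cos ε) (𝓝 0) (𝓝 (0 * Real.cos 0)) :=
      tendsto_id.mul (Real.continuous_cos.tendsto 0)
    simpa using this.mono_left nhdsWithin_le_nhds
  have hT0 : Tendsto (fun ε => (f ε)^2 * (Real.cos ε / Real.sin ε)) (𝓝[>] 0) (𝓝 0) := by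
    have h1 : Tendsto (fun ε => (f ε / ε)^2 * ((ε * Real.cos ε) * (ε / Real.sin ε)))
        (𝓝[>] 0) (𝓝 ((f' 0)^2 * (0 * 1))) := ((hs0.pow 2).mul (hεcos.mul hsin1'))
    norm_num at h1
    apply h1.congr'
    filter_upwards [Ioo_mem_nhdsGT_of_mem (by constructor <;> linarith : (0:ℝ) ∈ Ico 0 (Real.pi/2))] with ε hε
    have hεne : ε ≠ 0 := ne_of_gt hε.1
    have hsne : Real.sin ε ≠ 0 :=
      (Real.sin_pos_of_pos_of_lt_pi hε.1 (by linarith [hε.2])).ne'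
    field_simp
  have hTπ : Tendsto (fun ε => (f (Real.pi - ε))^2 *
      (Real.cos (Real.pi - ε) / Real.sin (Real.pi - ε))) (𝓝[>] 0) (𝓝 0) := by
    have hcosπ : Tendsto (fun ε : ℝ => ε * Real.cos (Real.pi - ε)) (𝓝[>] 0) (𝓝 0) := by
      have : Tendsto (fun ε : ℝ => ε * Real.cos (Real.pi - ε)) (𝓝 0)
          (𝓝 (0 * Real.cos (Real.pi - 0))) :=
        tendsto_id.mul ((Real.continuous_cos.comp (continuous_const.sub continuous_id)).tendsto 0)
      simpa using this.mono_left nhdsWithin_le_nhds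
    have h1 : Tendsto (fun ε => (f (Real.pi - ε) / (-ε))^2 *
        ((ε * Real.cos (Real.pi - ε)) * (ε / Real.sin ε)))
        (𝓝[>] 0) (𝓝 ((f' Real.pi)^2 * (0 * 1))) := ((hsπ.pow 2).mul (hcosπ.mul hsin1'))
    norm_num at h1
    apply h1.congr'
    filter_upwards [Ioo_mem_nhdsGT_of_mem (by constructor <;> linarith : (0:ℝ) ∈ Ico 0 (Real.pi/2))] with ε hε
    have hεne : ε ≠ 0 := ne_of_gt hε.1
    have hsne : Real.sin ε ≠ 0 :=
      (Real.sin_pos_of_pos_of_lt_pi hε.1 (by linarith [hε.2])).ne'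
    rw [Real.sin_pi_sub]
    field_simp
    rw [Real.cos_pi_sub]
    ring
  have hBtend : Tendsto B (𝓝[>] 0) (𝓝 0) := by
    have h := hTπ.sub hT0
    rw [sub_zero] at h
    exact h
  -- eventual inequality
  have hev : ∀ᶠ ε in 𝓝[>] (0:ℝ), B ε ≤ A ε := by
    filter_upwards [Ioo_mem_nhdsGT_of_mem (by constructor <;> linarith : (0:ℝ) ∈ Ico 0 (Real.pi/2))] with ε hε
    have key := steklov_key f f' hderiv hcont hε.1 hε.2
    have hεI : ε ∈ Icc (0:ℝ) Real.pi := ⟨hε.1.le, by linarith [hε.2]⟩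
    have hπεI : (Real.pi - ε) ∈ Icc (0:ℝ) Real.pi := ⟨by linarith [hε.1, hε.2], by linarith [hε.1]⟩
    have hint1 : IntervalIntegrable (fun t => (f' t)^2) volume ε (Real.pi - ε) :=
      ((hcont.pow 2).mono (uIcc_subset_Icc hεI hπεI)).intervalIntegrable
    have hint2 : IntervalIntegrable (fun t => (f t)^2) volume ε (Real.pi - ε) :=
      ((hfC.pow 2).mono (uIcc_subset_Icc hεI hπεI)).intervalIntegrable
    simp only [hA, hB, hg]
    rw [intervalIntegral.integral_sub hint1 hint2]
    exact key
  have hfinal : (0:ℝ) ≤ ∫ t in (0:ℝ)..Real.pi, g t :=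
    le_of_tendsto_of_tendsto hBtend hAtend hev
  have hint1 : IntervalIntegrable (fun t => (f' t)^2) volume 0 Real.pi := by
    apply ContinuousOn.intervalIntegrable; rw [uIcc_of_le hπpos.le]; exact hcont.pow 2
  have hint2 : IntervalIntegrable (fun t => (f t)^2) volume 0 Real.pi := by
    apply ContinuousOn.intervalIntegrable; rw [uIcc_of_le hπpos.le]; exact hfC.pow 2
  rw [hg] at hfinal
  rw [intervalIntegral.integral_sub hint1 hint2] at hfinal
  linarith
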